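/- arXiv:1412.6746 — 4 statements merged into one kernel-verified Lean document; each statement's English description precedes it below -/
import Mathlib

section
/- Let a > 0 and define the sequence (u_v) by u_1 = 1/(a+1) and u_v = ((v-1)a/(va+1)) u_{v-1} for v > 1. Then Σ_{v=1}^{∞} u_v = 1, i.e., (u_v) is a probability distribution on the positive integers. -/
open Finset Filter Topology

private lemma aux_one_add_sum_le_prod (f : ℕ → ℝ) (hf : ∀ k, 0 ≤ f k) (n : ℕ) :
    1 + ∑ k ∈ Finset.range n, f k ≤ ∏ k ∈ Finset.range n, (1 + f k) := by
  induction n with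
  | zero => simp
  | succ n ih =>
    rw [Finset.sum_range_succ, Finset.prod_range_succ]
    have hprod : (1:ℝ) ≤ ∏ k ∈ Finset.range n, (1 + f k) := by
      calc (1:ℝ) ≤ 1 + ∑ k ∈ Finset.range n, f k := by
            have : 0 ≤ ∑ k ∈ Finset.range n, f k := Finset.sum_nonneg fun k _ => hf k
            linarith
        _ ≤ _ := ih
    nlinarith [hf n, Finset.sum_nonneg (fun k (_ : k ∈ Finset.range n) => hf k)]

theorem stmt_3 (a : ℝ) (ha : 0 < a) (u : ℕ → ℝ)
    (h1 : u 1 = 1 / (a + 1))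
    (hrec : ∀ v : ℕ, 1 < v → u v = ((v - 1 : ℝ) * a / (v * a + 1)) * u (v - 1)) :
    HasSum (fun v : ℕ => u (v + 1)) 1 := by
  set P : ℕ → ℝ := fun n => ∏ k ∈ Finset.range n, (1 + 1 / ((k + 1 : ℝ) * a)) with hP
  have hPpos : ∀ n, 0 < P n := by
    intro n; apply Finset.prod_pos; intro k _; positivity
  set t : ℕ → ℝ := fun n => (P n)⁻¹ with ht
  have htpos : ∀ n, 0 < t n := fun n => inv_pos.2 (hPpos n)
  have hPsucc : ∀ n, P (n + 1) = P n * (1 + 1 / ((n + 1 : ℝ) * a)) := by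
    intro n; simp [hP, Finset.prod_range_succ]
  -- closed form
  have key : ∀ v : ℕ, u (v + 1) = t v / ((v + 1 : ℝ) * a + 1) := by
    intro v
    induction v with
    | zero =>
      simp [ht, hP, h1]
    | succ n ih =>
      have h2 : (1:ℕ) < n + 2 := by omega
      have hr := hrec (n + 2) h2
      have hcast : ((n + 2 : ℕ) : ℝ) = (n : ℝ) + 2 := by push_cast; ring
      rw [show n + 2 - 1 = n + 1 from rfl] at hr
      rw [hr, ih]
      have hP0 : P n ≠ 0 := ne_of_gt (hPpos n)
      have hP1 : P (n+1) ≠ 0 := ne_of_gt (hPpos (n+1))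
      have hc1 : ((n:ℝ) + 1) * a + 1 ≠ 0 := by positivity
      have hc2 : ((n:ℝ) + 2) * a + 1 ≠ 0 := by positivity
      have hc3 : ((n:ℝ) + 1) * a ≠ 0 := by positivity
      have e : t (n+1) = t n * (((n:ℝ)+1) * a) / (((n:ℝ)+1)*a + 1) := by
        simp only [ht, hPsucc n]
        field_simp
      rw [hcast]
      push_cast
      rw [e]
      field_simp
      ring
  have hsum : ∀ n : ℕ, ∑ v ∈ Finset.range n, u (v + 1) = 1 - t n := by
    intro n
    have tele : ∀ v : ℕ, u (v + 1) = t v - t (v + 1) := by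
      intro v
      rw [key v]
      have hc1 : ((v:ℝ) + 1) * a + 1 ≠ 0 := by positivity
      have : t (v+1) = t v * (((v:ℝ)+1) * a) / (((v:ℝ)+1)*a + 1) := by
        simp only [ht, hPsucc v]
        field_simp
      rw [this]
      field_simp
      ring
    calc ∑ v ∈ Finset.range n, u (v + 1) = ∑ v ∈ Finset.range n, (t v - t (v + 1)) := by
          exact Finset.sum_congr rfl fun v _ => tele v
      _ = t 0 - t n := Finset.sum_range_sub' t n
      _ = 1 - t n := by simp [ht, hP]
  have hPtop : Tendsto P atTop atTop := by
    apply tendsto_atTop_mono (fun n => aux_one_add_sum_le_prod _ (fun k => by positivity) n)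
    have h1' : Tendsto (fun n => ∑ k ∈ Finset.range n, (1 / ((k + 1 : ℝ) * a))) atTop atTop := by
      have : (fun n => ∑ k ∈ Finset.range n, (1 / ((k + 1 : ℝ) * a)))
          = fun n => a⁻¹ * ∑ k ∈ Finset.range n, (1 / ((k:ℝ) + 1)) := by
        funext n
        rw [Finset.mul_sum]
        refine Finset.sum_congr rfl fun k _ => ?_
        field_simp
      rw [this]
      exact (Real.tendsto_sum_range_one_div_nat_succ_atTop).const_mul_atTop (inv_pos.2 ha)
    exact tendsto_atTop_add_const_left _ 1 h1'
  have htzero : Tendsto t atTop (𝓝 0) := hPtop.inv_tendsto_atTop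
  have hnonneg : ∀ v : ℕ, 0 ≤ u (v + 1) := by
    intro v
    rw [key v]
    have : (0:ℝ) < ((v:ℝ)+1)*a + 1 := by positivity
    positivity
  rw [hasSum_iff_tendsto_nat_of_nonneg hnonneg]
  simp only [hsum]
  have : Tendsto (fun n => 1 - t n) atTop (𝓝 (1 - 0)) := tendsto_const_nhds.sub htzero
  simpa using this
end

section
/- Let h ∈ (0,1) and define (t_w) by t_1 = 1/(h+1) and t_w = (h(w-1)/(hw+1)) t_{w-1} for w > 1. Then Σ_{w=1}^{∞} t_w = 1. -/
theorem stmt_6 (h : ℝ) (h0 : 0 < h) (h1 : h < 1) (t : ℕ → ℝ)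
    (ht1 : t 1 = 1 / (h + 1))
    (hrec : ∀ w : ℕ, 1 < w → t w = (h * ((w : ℝ) - 1) / (h * w + 1)) * t (w - 1)) :
    HasSum (fun w : ℕ => t (w + 1)) 1 := by
  have hden : ∀ n : ℕ, 0 < h * n + 1 := fun n => by positivity
  -- positivity
  have tpos : ∀ n : ℕ, 1 ≤ n → 0 < t n := by
    intro n hn
    induction n, hn using Nat.le_induction with
    | base => rw [ht1]; positivity
    | succ n hn ih =>
      have hr := hrec (n + 1) (by omega)
      simp only [Nat.add_sub_cancel] at hr
      push_cast at hr
      rw [hr]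
      have hn' : (0:ℝ) < n := by exact_mod_cast hn
      have hd : (0:ℝ) < h * ((n:ℝ)+1) + 1 := by positivity
      exact mul_pos (div_pos (by nlinarith) hd) ih
  -- bound : n(n+1) t n ≤ 2 * t 1
  have bound : ∀ n : ℕ, 1 ≤ n → (n:ℝ) * ((n:ℝ)+1) * t n ≤ 2 * t 1 := by
    intro n hn
    induction n, hn using Nat.le_induction with
    | base => norm_num
    | succ n hn ih =>
      have hr := hrec (n + 1) (by omega)
      simp only [Nat.add_sub_cancel] at hr
      push_cast at hr
      have hn' : (1:ℝ) ≤ n := by exact_mod_cast hn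
      have htn := tpos n hn
      have hd : (0:ℝ) < h * ((n:ℝ)+1) + 1 := by positivity
      have hr' : t (n+1) * (h * ((n:ℝ)+1) + 1) = h * (n:ℝ) * t n := by
        rw [hr]; field_simp; ring
      push_cast
      have e1 : ((n:ℝ)+1)*((n:ℝ)+2) * (t (n+1) * (h*((n:ℝ)+1)+1))
          = ((n:ℝ)+1)*((n:ℝ)+2) * (h * (n:ℝ) * t n) := by rw [hr']
      nlinarith [e1, mul_le_mul_of_nonneg_right ih hd.le,
        mul_nonneg (mul_nonneg (n.cast_nonneg) (by positivity : (0:ℝ) ≤ (n:ℝ)+1)) htn.le,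
        hd, h1, h0]
  -- partial sums
  have psum : ∀ n : ℕ, 1 ≤ n →
      ∑ w ∈ Finset.range n, t (w + 1) = 1 - h * n * t n := by
    intro n hn
    induction n, hn using Nat.le_induction with
    | base =>
      rw [Finset.sum_range_one, ht1]
      have : h + 1 ≠ 0 := by positivity
      field_simp
      push_cast; ring
    | succ n hn ih =>
      rw [Finset.sum_range_succ, ih]
      have hr := hrec (n + 1) (by omega)
      simp only [Nat.add_sub_cancel] at hr
      push_cast at hr
      rw [hr]
      have hd : (0:ℝ) < h * ((n:ℝ)+1) + 1 := by positivity
      push_cast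
      field_simp
      ring
  -- tendsto
  have hnonneg : ∀ w : ℕ, 0 ≤ t (w + 1) := fun w => (tpos (w+1) (by omega)).le
  rw [hasSum_iff_tendsto_nat_of_nonneg hnonneg]
  have key : Filter.Tendsto (fun n : ℕ => h * n * t n) Filter.atTop (nhds 0) := by
    have hb : ∀ᶠ n : ℕ in Filter.atTop, h * n * t n ≤ h * (2 * t 1) / ((n:ℝ) + 1) := by
      filter_upwards [Filter.eventually_ge_atTop 1] with n hn
      have hb := bound n hn
      have hn' : (0:ℝ) < (n:ℝ) + 1 := by positivity
      rw [le_div_iff₀ hn']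
      nlinarith [tpos n hn]
    have hlo : ∀ᶠ n : ℕ in Filter.atTop, 0 ≤ h * n * t n := by
      filter_upwards [Filter.eventually_ge_atTop 1] with n hn
      have := tpos n hn
      have : (0:ℝ) ≤ n := n.cast_nonneg
      positivity
    have hto : Filter.Tendsto (fun n : ℕ => h * (2 * t 1) / ((n:ℝ) + 1))
        Filter.atTop (nhds 0) := by
      apply Filter.Tendsto.div_atTop tendsto_const_nhds
      exact Filter.tendsto_atTop_add_const_right _ 1 tendsto_natCast_atTop_atTop
    exact squeeze_zero' hlo hb hto
  have : Filter.Tendsto (fun n : ℕ => 1 - h * n * t n) Filter.atTop (nhds 1) := by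
    simpa using Filter.Tendsto.const_sub 1 key
  apply this.congr'
  filter_upwards [Filter.eventually_ge_atTop 1] with n hn
  exact (psum n hn).symm
end

section
/- Let 0 < p ≤ 1, 0 ≤ r ≤ 1, 0 ≤ q ≤ 1, and set a = pr/3 + (1−p)q. Assume r > 0 or (1−p)q > 0 (so a > 0). Define e_1 = (p(3−r) + 3(1−p)(1−q))/((a+1)p) and e_v = ((v−1)a/(va+1)) e_{v−1} for v > 1, and A = p(3−r) + 3(1−p)(1−q). Then Σ_{v=1}^{∞} (p/A) e_v = 1. -/
theorem stmt_15 (p r q : ℝ) (hp0 : 0 < p) (hp1 : p ≤ 1)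
    (hr0 : 0 ≤ r) (hr1 : r ≤ 1) (hq0 : 0 ≤ q) (hq1 : q ≤ 1)
    (a : ℝ) (ha : a = p * r / 3 + (1 - p) * q)
    (hpos : 0 < r ∨ 0 < (1 - p) * q)
    (e : ℕ → ℝ)
    (he1 : e 1 = (p * (3 - r) + 3 * (1 - p) * (1 - q)) / ((a + 1) * p))
    (hrec : ∀ v : ℕ, 1 < v → e v = (((v : ℝ) - 1) * a / (v * a + 1)) * e (v - 1))
    (A : ℝ) (hA : A = p * (3 - r) + 3 * (1 - p) * (1 - q)) :
    HasSum (fun v : ℕ => (p / A) * e (v + 1)) 1 := by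
  have ha0 : 0 < a := by
    rcases hpos with h | h
    · have h1 : 0 < p * r / 3 := by positivity
      have h2 : 0 ≤ (1 - p) * q := mul_nonneg (by linarith) hq0
      linarith
    · have h1 : 0 ≤ p * r / 3 := by positivity
      linarith
  have hA0 : 0 < A := by
    have h1 : 0 < p * (3 - r) := by nlinarith
    have h2 : 0 ≤ 3 * (1 - p) * (1 - q) := by nlinarith
    linarith
  set T : ℕ → ℝ := fun n => ∏ k ∈ Finset.range n, ((k + 1 : ℝ) * a / ((k + 1) * a + 1))
    with hT
  have hden : ∀ n : ℕ, 0 < ((n : ℝ) + 1) * a + 1 := by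
    intro n
    have : (0:ℝ) ≤ (n : ℝ) := Nat.cast_nonneg n
    nlinarith
  have hTpos : ∀ n, 0 < T n := by
    intro n
    apply Finset.prod_pos
    intro k _
    exact div_pos (by positivity) (hden k)
  have hTrec : ∀ n : ℕ, T (n + 1) = T n * (((n:ℝ) + 1) * a / (((n:ℝ) + 1) * a + 1)) := by
    intro n
    simp only [hT, Finset.prod_range_succ]
  -- key telescoping identity
  have key : ∀ n : ℕ, (p / A) * e (n + 1) = T n - T (n + 1) := by
    intro n
    induction n with
    | zero =>
      have hT0 : T 0 = 1 := by simp [hT]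
      have hT1 : T 1 = a / (a + 1) := by simp [hT]
      rw [he1, ← hA, hT0, hT1]
      have hA' : A ≠ 0 := ne_of_gt hA0
      have hp' : p ≠ 0 := ne_of_gt hp0
      have haa : a + 1 ≠ 0 := by positivity
      field_simp
      ring
    | succ n ih =>
      have hv : e (n + 2) = (((n:ℝ) + 1) * a / (((n:ℝ) + 2) * a + 1)) * e (n + 1) := by
        have h := hrec (n + 2) (by omega)
        norm_num at h
        push_cast at h
        linear_combination h
      have hd1 : ((n:ℝ) + 1) * a + 1 ≠ 0 := ne_of_gt (hden n)
      have hd2 : ((n:ℝ) + 2) * a + 1 ≠ 0 := by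
        have := hden (n + 1); push_cast at this ⊢; linarith
      have e2 : T (n + 2) = T (n + 1) * (((n:ℝ) + 2) * a / (((n:ℝ) + 2) * a + 1)) := by
        have h := hTrec (n + 1); push_cast at h; linear_combination h
      calc (p / A) * e (n + 1 + 1)
          = (((n:ℝ) + 1) * a / (((n:ℝ) + 2) * a + 1)) * ((p / A) * e (n + 1)) := by
            rw [hv]; ring
        _ = (((n:ℝ) + 1) * a / (((n:ℝ) + 2) * a + 1)) * (T n - T (n + 1)) := by rw [ih]
        _ = T (n + 1) - T (n + 2) := by
            rw [e2, hTrec n]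
            field_simp
            ring
  -- nonnegativity of the terms
  have hnonneg : ∀ n : ℕ, 0 ≤ (p / A) * e (n + 1) := by
    intro n
    rw [key n, hTrec n]
    have h1 : ((n:ℝ) + 1) * a / (((n:ℝ) + 1) * a + 1) ≤ 1 := by
      rw [div_le_one (hden n)]; linarith
    nlinarith [hTpos n, hTpos (n + 1)]
  -- T n → 0
  have hTbound : ∀ n : ℕ, T n ≤ (1 + a⁻¹ * ∑ k ∈ Finset.range n, (1 : ℝ) / (k + 1))⁻¹ := by
    intro n
    have hP : 1 + a⁻¹ * ∑ k ∈ Finset.range n, (1 : ℝ) / (k + 1)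
        ≤ ∏ k ∈ Finset.range n, (((k : ℝ) + 1) * a + 1) / (((k : ℝ) + 1) * a) := by
      induction n with
      | zero => simp
      | succ m ihm =>
        rw [Finset.prod_range_succ, Finset.sum_range_succ]
        have hterm : (((m : ℝ) + 1) * a + 1) / (((m : ℝ) + 1) * a)
            = 1 + a⁻¹ * (1 / ((m : ℝ) + 1)) := by
          have hm : ((m:ℝ) + 1) ≠ 0 := by positivity
          field_simp
        rw [hterm]
        have hprodpos : (0:ℝ) < ∏ k ∈ Finset.range m, (((k : ℝ) + 1) * a + 1) / (((k : ℝ) + 1) * a) := by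
          apply Finset.prod_pos
          intro k _
          exact div_pos (hden k) (by positivity)
        have ht0 : (0:ℝ) ≤ a⁻¹ * (1 / ((m : ℝ) + 1)) := by positivity
        have hsum0 : (0:ℝ) ≤ a⁻¹ * ∑ k ∈ Finset.range m, (1 : ℝ) / (k + 1) := by
          have : (0:ℝ) ≤ ∑ k ∈ Finset.range m, (1 : ℝ) / (k + 1) :=
            Finset.sum_nonneg fun k _ => by positivity
          positivity
        nlinarith
    have hPpos : (0:ℝ) < 1 + a⁻¹ * ∑ k ∈ Finset.range n, (1 : ℝ) / (k + 1) := by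
      have : (0:ℝ) ≤ ∑ k ∈ Finset.range n, (1 : ℝ) / (k + 1) :=
        Finset.sum_nonneg fun k _ => by positivity
      have ha' : (0:ℝ) ≤ a⁻¹ := by positivity
      nlinarith
    have hTinv : T n = (∏ k ∈ Finset.range n, (((k : ℝ) + 1) * a + 1) / (((k : ℝ) + 1) * a))⁻¹ := by
      rw [hT, ← Finset.prod_inv_distrib]
      apply Finset.prod_congr rfl
      intro k _
      rw [inv_div]
    rw [hTinv]
    exact inv_anti₀ hPpos hP
  have hTtend : Filter.Tendsto T Filter.atTop (nhds 0) := by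
    apply squeeze_zero (fun n => (hTpos n).le) hTbound
    apply Filter.Tendsto.inv_tendsto_atTop
    apply Filter.tendsto_atTop_add_const_left
    exact Filter.Tendsto.const_mul_atTop (by positivity) Real.tendsto_sum_range_one_div_nat_succ_atTop
  rw [hasSum_iff_tendsto_nat_of_nonneg hnonneg]
  have hsum : ∀ n : ℕ, ∑ i ∈ Finset.range n, (p / A) * e (i + 1) = T 0 - T n := by
    intro n
    rw [Finset.sum_congr rfl fun i _ => key i]
    exact Finset.sum_range_sub' T n
  simp only [hsum]
  have hT0 : T 0 = 1 := by simp [hT]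
  rw [hT0]
  simpa using (tendsto_const_nhds.sub hTtend)
end

section
/- Let h > 0 and define k_1 = (1−h)/(h+1), k_w = ((w−1)h/(wh+1)) k_{w−1} for w > 1, and B = 1 − h (assume 0 < h < 1). Then t_w := k_w/B satisfies t_1 = 1/(h+1), t_w = (h(w−1)/(hw+1)) t_{w−1}, and Σ_{w=1}^{∞} t_w = 1. -/
theorem stmt_16 (h : ℝ) (h0 : 0 < h) (h1 : h < 1)
    (k : ℕ → ℝ)
    (hk1 : k 1 = (1 - h) / (h + 1))
    (hrec : ∀ w : ℕ, 1 < w → k w = (((w : ℝ) - 1) * h / (w * h + 1)) * k (w - 1))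
    (B : ℝ) (hB : B = 1 - h)
    (t : ℕ → ℝ) (ht : ∀ w, t w = k w / B) :
    t 1 = 1 / (h + 1) ∧
    (∀ w : ℕ, 1 < w → t w = (h * ((w : ℝ) - 1) / (h * w + 1)) * t (w - 1)) ∧
    HasSum (fun w : ℕ => t (w + 1)) 1 := by
  have hBne : B ≠ 0 := by rw [hB]; nlinarith
  have hh1 : h + 1 ≠ 0 := by positivity
  have hne1 : (1:ℝ) - h ≠ 0 := by linarith
  have ht1 : t 1 = 1 / (h + 1) := by
    rw [ht, hk1, hB]
    field_simp
  have htrec : ∀ w : ℕ, 1 < w → t w = (h * ((w : ℝ) - 1) / (h * w + 1)) * t (w - 1) := by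
    intro w hw
    rw [ht, hrec w hw, ht]
    ring
  refine ⟨ht1, htrec, ?_⟩
  -- positivity of t (n+1)
  have hpos : ∀ n : ℕ, 0 < t (n + 1) := by
    intro n
    induction n with
    | zero => rw [ht1]; positivity
    | succ m ih =>
      have hw : 1 < m + 2 := by omega
      have := htrec (m + 2) hw
      rw [show m + 2 - 1 = m + 1 by omega] at this
      rw [this]
      have hc : (0:ℝ) < ((m + 2 : ℕ) : ℝ) - 1 := by push_cast; linarith
      have hd : (0:ℝ) < h * ((m + 2 : ℕ) : ℝ) + 1 := by positivity
      positivity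
  -- the auxiliary sequence u
  set u : ℕ → ℝ := fun n => if n = 0 then 1 else h * n * t n with hu
  have hu0 : u 0 = 1 := by simp [hu]
  have huS : ∀ n : ℕ, u (n + 1) = h * (n + 1) * t (n + 1) := by
    intro n; simp [hu]
  have hstep : ∀ n : ℕ, u (n + 1) = u n - t (n + 1) := by
    intro n
    cases n with
    | zero =>
      rw [huS, hu0, ht1]
      push_cast
      field_simp
      ring
    | succ m =>
      have hw : 1 < m + 2 := by omega
      have hr := htrec (m + 2) hw
      rw [show m + 2 - 1 = m + 1 by omega] at hr
      rw [huS, huS]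
      have hd : (0:ℝ) < h * ((m + 2 : ℕ) : ℝ) + 1 := by positivity
      have hd' : h * ((m + 2 : ℕ) : ℝ) + 1 ≠ 0 := ne_of_gt hd
      rw [hr]
      push_cast at hd' ⊢
      field_simp
      ring
  have hpsum : ∀ n : ℕ, (∑ i ∈ Finset.range n, t (i + 1)) = 1 - u n := by
    intro n
    induction n with
    | zero => simp [hu0]
    | succ m ih =>
      rw [Finset.sum_range_succ, ih, hstep m]
      ring
  have hunn : ∀ n : ℕ, 0 ≤ u n := by
    intro n
    cases n with
    | zero => rw [hu0]; norm_num
    | succ m =>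
      rw [huS]
      have := hpos m
      positivity
  have hanti : Antitone u := by
    apply antitone_nat_of_succ_le
    intro n
    rw [hstep n]
    have := hpos n
    linarith
  have hbdd : BddBelow (Set.range u) := ⟨0, by rintro x ⟨n, rfl⟩; exact hunn n⟩
  set L := ⨅ n, u n with hLdef
  have hLlim : Filter.Tendsto u Filter.atTop (nhds L) :=
    tendsto_atTop_ciInf hanti hbdd
  have hLnn : 0 ≤ L := le_ciInf hunn
  have hLle : ∀ n, L ≤ u n := fun n => ciInf_le hbdd n
  -- summability
  have hsummable : Summable (fun w : ℕ => t (w + 1)) := by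
    apply summable_of_sum_range_le (c := 1) (fun n => le_of_lt (hpos n))
    intro n
    rw [hpsum n]
    linarith [hunn n]
  have hS := hsummable.hasSum
  have hlim1 : Filter.Tendsto (fun n => ∑ i ∈ Finset.range n, t (i + 1))
      Filter.atTop (nhds (∑' w : ℕ, t (w + 1))) := hS.tendsto_sum_nat
  have hlim2 : Filter.Tendsto (fun n => ∑ i ∈ Finset.range n, t (i + 1))
      Filter.atTop (nhds (1 - L)) := by
    simp only [hpsum]
    exact (tendsto_const_nhds.sub hLlim)
  have htsum : (∑' w : ℕ, t (w + 1)) = 1 - L := tendsto_nhds_unique hlim1 hlim2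
  -- L = 0
  have hL0 : L = 0 := by
    by_contra hne
    have hLpos : 0 < L := lt_of_le_of_ne hLnn (Ne.symm hne)
    have hcomp : ∀ n : ℕ, (L / h) * (1 / ((n : ℝ) + 1)) ≤ t (n + 1) := by
      intro n
      have h1' := hLle (n + 1)
      rw [huS] at h1'
      have hn1 : (0:ℝ) < (n : ℝ) + 1 := by positivity
      rw [div_mul_div_comm, div_le_iff₀ (by positivity)]
      push_cast at h1'
      nlinarith [hpos n]
    have hsum2 : Summable (fun n : ℕ => (L / h) * (1 / ((n : ℝ) + 1))) :=
      Summable.of_nonneg_of_le (fun n => by positivity) hcomp hsummable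
    have hsum3 : Summable (fun n : ℕ => 1 / ((n : ℝ) + 1)) := by
      have := hsum2.mul_left (h / L)
      have heq : (fun n : ℕ => (h / L) * ((L / h) * (1 / ((n : ℝ) + 1)))) =
          (fun n : ℕ => 1 / ((n : ℝ) + 1)) := by
        funext n
        field_simp
      rwa [heq] at this
    have hsum4 : Summable (fun n : ℕ => 1 / ((n : ℕ) : ℝ)) := by
      rw [← summable_nat_add_iff 1]
      convert hsum3 using 2 with n
      · rfl
      push_cast
      ring
    exact Real.not_summable_one_div_natCast hsum4
  rw [hL0, sub_zero] at htsum
  rwa [htsum] at hS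
end
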